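/- Let A be a groupoid. The set of strict automorphisms F of A for which there exists a natural transformation 𝟭_A ⟹ F is a normal subgroup of the group Aut(A) of strict automorphisms of A under composition of functors. -/

import Mathlib

/-!
Statement 3: For a groupoid `A`, the set of strict automorphisms `F` of `A` for
which there exists a natural transformation `𝟭_A ⟹ F` is a normal subgroup of the
group `Aut(A)` of strict automorphisms under composition of functors.
-/

open CategoryTheory

universe v u

structure GrpdAut (A : Type u) [Groupoid A] where
  F : A ⥤ A
  inv : A ⥤ A
  comp_inv : F ⋙ inv = 𝟭 A
  inv_comp : inv ⋙ F = 𝟭 A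

variable {A : Type u} [Groupoid A]

theorem GrpdAut.ext' {f g : GrpdAut A} (h1 : f.F = g.F) (h2 : f.inv = g.inv) :
    f = g := by
  cases f; cases g; cases h1; cases h2; rfl

/-- The group `Aut(A)` of strict automorphisms of `A` under composition of
functors (written left-to-right). -/
instance : Group (GrpdAut A) where
  mul f g :=
    { F := f.F ⋙ g.F
      inv := g.inv ⋙ f.inv
      comp_inv := by
        rw [Functor.assoc, ← Functor.assoc g.F, g.comp_inv, Functor.id_comp, f.comp_inv]
      inv_comp := by
        rw [Functor.assoc, ← Functor.assoc f.inv, f.inv_comp, Functor.id_comp, g.inv_comp] }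
  one := ⟨𝟭 A, 𝟭 A, rfl, rfl⟩
  inv f := ⟨f.inv, f.F, f.inv_comp, f.comp_inv⟩
  mul_assoc _ _ _ := rfl
  one_mul _ := rfl
  mul_one _ := rfl
  inv_mul_cancel f := GrpdAut.ext' f.inv_comp f.inv_comp

/-- The set of strict automorphisms `F` of `A` admitting a natural
transformation `𝟭_A ⟹ F` is a normal subgroup of `Aut(A)`. -/
theorem inner_is_normal_subgroup (A : Type u) [Groupoid A] :
    ∃ H : Subgroup (GrpdAut A),
      (∀ F : GrpdAut A, F ∈ H ↔ Nonempty (𝟭 A ⟶ F.F)) ∧ H.Normal := by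
  refine ⟨{
    carrier := {F | Nonempty (𝟭 A ⟶ F.F)}
    one_mem' := ⟨𝟙 (𝟭 A)⟩
    mul_mem' := by
      rintro f g ⟨σ⟩ ⟨τ⟩
      exact ⟨σ ≫ eqToHom (f.F.comp_id).symm ≫ Functor.whiskerLeft f.F τ⟩
    inv_mem' := by
      rintro f ⟨σ⟩
      exact ⟨eqToHom f.inv_comp.symm ≫ Functor.whiskerLeft f.inv (haveI : IsIso σ := NatIso.isIso_of_isIso_app σ; CategoryTheory.inv σ) ≫
        eqToHom (f.inv.comp_id)⟩ }, fun F => Iff.rfl, ?_⟩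
  constructor
  rintro n ⟨σ⟩ g
  exact ⟨eqToHom (by rw [Functor.comp_id]; exact g.comp_inv.symm) ≫
    Functor.whiskerRight (Functor.whiskerLeft g.F σ) g.inv⟩
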